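/- Let A ∈ F_{q^3} satisfy N(A) = 1 and A ≠ 1. Then A_2 := (A − A^{q+1})/(A^{q+1} − 1) is a root of h_2(X) = X^{q+1} + X^q + 1, and (A^{q+1} − 1)/(1 − A^q) · A_2 = A. -/

import Mathlib

theorem stmt_6 (q : ℕ) (hq : IsPrimePow q)
    (F : Type) [Field F] [Fintype F] (hcard : Fintype.card F = q ^ 3)
    (A : F) (hA : A ^ (1 + q + q ^ 2) = 1) (hA1 : A ≠ 1) :
    ((A - A ^ (q + 1)) / (A ^ (q + 1) - 1)) ^ (q + 1) +
      ((A - A ^ (q + 1)) / (A ^ (q + 1) - 1)) ^ q + 1 = 0 ∧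
    (A ^ (q + 1) - 1) / (1 - A ^ q) * ((A - A ^ (q + 1)) / (A ^ (q + 1) - 1)) = A := by
  obtain ⟨p, k, hp, hk, hpk⟩ := hq
  have hp' : p.Prime := hp.nat_prime
  haveI : Fact p.Prime := ⟨hp'⟩
  -- characteristic
  have hchar : CharP F p := by
    obtain ⟨n, hrp, hc⟩ := FiniteField.card F (ringChar F)
    have hdvd : p ∣ ringChar F := by
      have h1 : p ∣ (ringChar F) ^ (n : ℕ) := by
        rw [← hc, hcard, ← hpk, ← pow_mul]
        exact dvd_pow_self p (by omega)
      exact hp'.prime.dvd_of_dvd_pow h1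
    have : p = ringChar F := ((Nat.prime_dvd_prime_iff_eq hp' hrp).mp hdvd)
    exact this ▸ ringChar.charP F
  have frob : ∀ x y : F, (x - y) ^ q = x ^ q - y ^ q := by
    intro x y
    rw [← hpk, sub_pow_char_pow]
  have hA0 : A ≠ 0 := by
    intro h
    rw [h, zero_pow (by omega)] at hA
    exact zero_ne_one hA
  have hq3 : A ^ q ^ 3 = A := by
    have h := FiniteField.pow_card A
    rwa [hcard] at h
  have hBne : A ^ q ≠ 1 := by
    intro h
    apply hA1
    calc A = A ^ q ^ 3 := hq3.symm
    _ = ((A ^ q) ^ q) ^ q := by rw [← pow_mul, ← pow_mul]; ring_nf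
    _ = 1 := by rw [h, one_pow, one_pow]
  have hrel : A ^ q ^ 2 * A ^ q * A = 1 := by
    rw [pow_add, pow_add, pow_one] at hA
    linear_combination hA
  have hCne : A ^ (q + 1) ≠ 1 := by
    intro h
    apply hA1
    have h2 : A ^ q ^ 2 = 1 := by
      have : A ^ q ^ 2 * (A ^ q * A) = 1 := by rw [← mul_assoc]; exact hrel
      have hqq : A ^ q * A = A ^ (q + 1) := by rw [pow_succ]
      rw [hqq, h, mul_one] at this
      exact this
    calc A = A ^ q ^ 3 := hq3.symm
    _ = (A ^ q ^ 2) ^ q := by rw [← pow_mul]; ring_nf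
    _ = 1 := by rw [h2, one_pow]
  have hD : A ^ (q + 1) - 1 ≠ 0 := sub_ne_zero.mpr hCne
  have hB1 : (1 : F) - A ^ q ≠ 0 := fun h => hBne (by linear_combination -h)
  constructor
  · have hCq : (A ^ (q + 1)) ^ q = A ^ q ^ 2 * A ^ q := by
      rw [← pow_mul, ← pow_add]
      congr 1
      ring
    have hNq : (A - A ^ (q + 1)) ^ q = A ^ q - A ^ q ^ 2 * A ^ q := by
      rw [frob, hCq]
    have hDq : (A ^ (q + 1) - 1) ^ q = A ^ q ^ 2 * A ^ q - 1 := by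
      rw [frob, hCq, one_pow]
    have key : (A - A ^ (q + 1)) ^ (q + 1) +
        (A - A ^ (q + 1)) ^ q * (A ^ (q + 1) - 1) +
        (A ^ (q + 1) - 1) ^ (q + 1) = 0 := by
      rw [pow_succ (A - A ^ (q + 1)) q, pow_succ (A ^ (q + 1) - 1) q, hNq, hDq]
      linear_combination (A ^ q - 1) * hrel
    rw [div_pow, div_pow]
    have heq : (A - A ^ (q + 1)) ^ (q + 1) / (A ^ (q + 1) - 1) ^ (q + 1) +
        (A - A ^ (q + 1)) ^ q / (A ^ (q + 1) - 1) ^ q + 1 =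
        ((A - A ^ (q + 1)) ^ (q + 1) +
          (A - A ^ (q + 1)) ^ q * (A ^ (q + 1) - 1) +
          (A ^ (q + 1) - 1) ^ (q + 1)) / (A ^ (q + 1) - 1) ^ (q + 1) := by
      rw [pow_succ (A - A ^ (q + 1)) q, pow_succ (A ^ (q + 1) - 1) q]
      field_simp
    rw [heq, key, zero_div]
  · field_simp
    ring
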